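/- Let p(x,y) = M(x)y² + a(x)y + b(x) and q(x,y) = N(x)y³ + c(x)y² + d(x)y + e(x) be polynomials in ℝ[x,y], where M,a,b,N,c,d,e ∈ ℝ[x]. Let R₀(x) be the 0-subresultant in y of p and q (treating them as polynomials in y of formal degrees 2 and 3), write R₀(x) = b₀ + b₁x + ⋯ + b_l x^l with b_l ≠ 0 its leading coefficient. Suppose (i) R₀(x) has no common real zeros with N(x), and (ii) there exists z ∈ ℝ with b_l·R₀(z) < 0. Then there exists (α,β) ∈ ℝ² such that p(α,β) = q(α,β) = 0. -/

import Mathlib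

/-- The Sylvester matrix of two polynomials of formal degrees `n` and `m`,
given by their coefficient functions `P` and `Q` (`P i` is the coefficient of
`yⁱ`).  Its first `m` rows contain the coefficient vector `(P n, …, P 0)`
successively shifted to the right, and its last `n` rows contain the
coefficient vector `(Q m, …, Q 0)` in reversed shift order. -/
def sylvesterMat {R : Type*} [CommRing R] (n m : ℕ) (P Q : ℕ → R) :
    Matrix (Fin (n + m)) (Fin (n + m)) R :=
  Matrix.of fun i s =>
    if (i : ℕ) < m then
      (if (i : ℕ) ≤ (s : ℕ) ∧ (s : ℕ) ≤ (i : ℕ) + n then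
        P (n - ((s : ℕ) - (i : ℕ))) else 0)
    else
      (if n - 1 - ((i : ℕ) - m) ≤ (s : ℕ) ∧ (s : ℕ) ≤ n - 1 - ((i : ℕ) - m) + m then
        Q (m + n - 1 - ((i : ℕ) - m) - (s : ℕ)) else 0)

/-- The `k`-subresultant: the determinant of the matrix obtained from the
Sylvester matrix by deleting its first `k` and last `k` rows and columns. -/
def subresultant {R : Type*} [CommRing R] (n m : ℕ) (P Q : ℕ → R) (k : ℕ) : R :=
  Matrix.det (Matrix.of fun r c : Fin (n + m - 2 * k) =>
    sylvesterMat n m P Q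
      ⟨k + (r : ℕ), by have := r.isLt; omega⟩
      ⟨k + (c : ℕ), by have := c.isLt; omega⟩)

open Polynomial

lemma cubic_real_root (n c d e : ℝ) (hn : n ≠ 0) :
    ∃ y : ℝ, n * y ^ 3 + c * y ^ 2 + d * y + e = 0 := by
  suffices h : ∀ n c d e : ℝ, 0 < n → ∃ y : ℝ, n * y ^ 3 + c * y ^ 2 + d * y + e = 0 by
    rcases hn.lt_or_gt with h1 | h1
    · obtain ⟨y, hy⟩ := h (-n) (-c) (-d) (-e) (by linarith)
      exact ⟨y, by linarith⟩
    · exact h n c d e h1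
  clear hn n c d e
  intro n c d e hn
  set P : Polynomial ℝ := C n * X ^ 3 + C c * X ^ 2 + C d * X + C e with hP
  have hdeg : P.degree = 3 := degree_cubic hn.ne'
  have hlc : P.leadingCoeff = n := leadingCoeff_cubic hn.ne'
  have h1 : Filter.Tendsto (fun x => P.eval x) Filter.atTop Filter.atTop :=
    P.tendsto_atTop_of_leadingCoeff_nonneg (by rw [hdeg]; norm_num)
      (by rw [hlc]; exact hn.le)
  set Q : Polynomial ℝ := C n * X ^ 3 + C (-c) * X ^ 2 + C d * X + C (-e) with hQ
  have h2 : Filter.Tendsto (fun x => Q.eval x) Filter.atTop Filter.atTop :=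
    Q.tendsto_atTop_of_leadingCoeff_nonneg
      (by rw [degree_cubic hn.ne']; norm_num)
      (by rw [leadingCoeff_cubic hn.ne']; exact hn.le)
  obtain ⟨w, hw⟩ := ((h1.eventually_gt_atTop 0).and
    ((h2.eventually_gt_atTop 0).and (Filter.eventually_ge_atTop (0:ℝ)))).exists
  obtain ⟨hw1, hw2, hw0⟩ := hw
  have hneg : P.eval (-w) < 0 := by
    have : P.eval (-w) = -Q.eval w := by simp [hP, hQ]; ring
    rw [this]; linarith
  have hle : (-w) ≤ w := by linarith
  have hiv := intermediate_value_Icc hle P.continuousOn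
  have h0 : (0:ℝ) ∈ Set.Icc (P.eval (-w)) (P.eval w) := ⟨hneg.le, hw1.le⟩
  obtain ⟨y, _, hy⟩ := hiv h0
  refine ⟨y, ?_⟩
  have hy' : P.eval y = 0 := hy
  have h5 : P.eval y = n * y ^ 3 + c * y ^ 2 + d * y + e := by simp [hP]
  linarith

lemma no_sign_change (f : ℝ → ℝ) (hf : Continuous f)
    (H : ∀ α : ℝ, f α = 0 →
      ∃ δ > 0, ((∀ x, |x - α| < δ → 0 ≤ f x) ∨ (∀ x, |x - α| < δ → f x ≤ 0)) ∧
        (∀ x, x ≠ α → |x - α| < δ → f x ≠ 0))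
    (u v : ℝ) (huv : u < v) (hu : 0 < f u) (hv : f v < 0) : False := by
  set S : Set ℝ := {x | x ∈ Set.Icc u v ∧ f x < 0} with hS
  have hvS : v ∈ S := ⟨⟨huv.le, le_rfl⟩, hv⟩
  have hne : S.Nonempty := ⟨v, hvS⟩
  have hbdd : BddBelow S := ⟨u, fun x hx => hx.1.1⟩
  set α := sInf S with hα
  have hαle : ∀ x ∈ S, α ≤ x := fun x hx => csInf_le hbdd hx
  have hαu : u ≤ α := le_csInf hne fun x hx => hx.1.1
  have hαv : α ≤ v := hαle v hvS
  have hfα_le : f α ≤ 0 := by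
    have hcl : α ∈ closure S := csInf_mem_closure hne hbdd
    have hsub : S ⊆ {x | f x ≤ 0} := fun x hx => hx.2.le
    exact (isClosed_le hf continuous_const).closure_subset_iff.mpr hsub hcl
  have huα : u < α := by
    rcases eq_or_lt_of_le hαu with h | h
    · exfalso; rw [← h] at hfα_le; linarith
    · exact h
  have hleft : ∀ x, u ≤ x → x < α → 0 ≤ f x := by
    intro x hux hxα
    by_contra hneg
    push_neg at hneg
    exact absurd (hαle x ⟨⟨hux, hxα.le.trans hαv⟩, hneg⟩) (not_le.mpr hxα)
  have hfα_ge : 0 ≤ f α := by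
    have hcl : α ∈ closure (Set.Ico u α) := by
      rw [closure_Ico huα.ne]
      exact ⟨hαu, le_rfl⟩
    have hsub : Set.Ico u α ⊆ {x | 0 ≤ f x} := fun x hx => hleft x hx.1 hx.2
    exact (isClosed_le continuous_const hf).closure_subset_iff.mpr hsub hcl
  obtain ⟨δ, hδ, hsign, hiso⟩ := H α (le_antisymm hfα_le hfα_ge)
  rcases hsign with hpos | hneg'
  · obtain ⟨s, hsS, hs⟩ := exists_lt_of_csInf_lt hne (by linarith : sInf S < α + δ)
    have h1 : α ≤ s := hαle s hsS
    have h2 : 0 ≤ f s := hpos s (by rw [abs_lt]; constructor <;> linarith)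
    linarith [hsS.2]
  · set x0 := max u (α - δ / 2) with hx0
    have hx0α : x0 < α := max_lt huα (by linarith)
    have h1 : 0 ≤ f x0 := hleft x0 (le_max_left _ _) hx0α
    have h2 : |x0 - α| < δ := by
      rw [abs_lt]
      constructor
      · have := le_max_right u (α - δ / 2); linarith
      · linarith
    exact hiso x0 (ne_of_lt hx0α) h2 (le_antisymm (hneg' x0 h2) h1)


set_option maxHeartbeats 1000000 in
lemma subres_two_three {R : Type*} [CommRing R] (P Q : ℕ → R) :
    subresultant 2 3 P Q 0 =
    -(P 0)^3*(Q 3)^2 + (P 1)*(P 0)^2*(Q 3)*(Q 2) - (P 1)^2*(P 0)*(Q 3)*(Q 1)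
    + (P 1)^3*(Q 3)*(Q 0) - (P 2)*(P 0)^2*(Q 2)^2 + 2*(P 2)*(P 0)^2*(Q 3)*(Q 1)
    + (P 2)*(P 1)*(P 0)*(Q 2)*(Q 1) - 3*(P 2)*(P 1)*(P 0)*(Q 3)*(Q 0)
    - (P 2)*(P 1)^2*(Q 2)*(Q 0) - (P 2)^2*(P 0)*(Q 1)^2 + 2*(P 2)^2*(P 0)*(Q 2)*(Q 0)
    + (P 2)^2*(P 1)*(Q 1)*(Q 0) - (P 2)^3*(Q 0)^2 := by
  have h : subresultant 2 3 P Q 0 =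
      Matrix.det !![P 2, P 1, P 0, 0, 0;
                    0, P 2, P 1, P 0, 0;
                    0, 0, P 2, P 1, P 0;
                    0, Q 3, Q 2, Q 1, Q 0;
                    Q 3, Q 2, Q 1, Q 0, 0] := by
    unfold subresultant
    congr 1
    ext i j
    fin_cases i <;> fin_cases j <;> rfl
  rw [h]
  simp [Matrix.det_succ_row_zero, Fin.sum_univ_succ]
  simp [Fin.succAbove, Fin.lt_def]
  ring


/-- Let `p(x,y) = M(x)y² + a(x)y + b(x)` and
`q(x,y) = N(x)y³ + c(x)y² + d(x)y + e(x)` with `M,a,b,N,c,d,e ∈ ℝ[x]`, and let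
`R₀(x)` denote the `0`-subresultant of `p` and `q` in `y` (formal degrees `2`
and `3`), with leading coefficient `b_l`.  If `R₀` and `N` have no common real
zero, and `b_l · R₀(z) < 0` for some `z ∈ ℝ`, then `p` and `q` have a common
real zero `(α,β)`. -/
theorem common_zero_deg2_deg3
    (M a b N c d e : Polynomial ℝ)
    (R₀ : Polynomial ℝ)
    (hR₀ : R₀ = subresultant 2 3
      (fun i => if i = 0 then b else if i = 1 then a else if i = 2 then M else 0)
      (fun i => if i = 0 then e else if i = 1 then d else if i = 2 then c
        else if i = 3 then N else 0) 0)
    (hcommon : ∀ x : ℝ, ¬(R₀.eval x = 0 ∧ N.eval x = 0))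
    (hneg : ∃ z : ℝ, R₀.leadingCoeff * R₀.eval z < 0) :
    ∃ α β : ℝ,
      M.eval α * β ^ 2 + a.eval α * β + b.eval α = 0 ∧
      N.eval α * β ^ 3 + c.eval α * β ^ 2 + d.eval α * β + e.eval α = 0 := by
  by_contra hnc
  push_neg at hnc
  obtain ⟨z, hz⟩ := hneg
  have hR0ne : R₀ ≠ 0 := by
    rintro rfl
    simp only [leadingCoeff_zero, eval_zero, mul_zero] at hz
    exact lt_irrefl 0 hz
  have hpoly : R₀ = -b^3*N^2 + a*b^2*N*c - a^2*b*N*d + a^3*N*e - M*b^2*c^2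
      + 2*M*b^2*N*d + M*a*b*c*d - 3*M*a*b*N*e - M*a^2*c*e - M^2*b*d^2
      + 2*M^2*b*c*e + M^2*a*d*e - M^3*e^2 := by
    rw [hR₀, subres_two_three]
    norm_num
  have hEV : ∀ x : ℝ, R₀.eval x =
      -(b.eval x)^3*(N.eval x)^2 + (a.eval x)*(b.eval x)^2*(N.eval x)*(c.eval x)
      - (a.eval x)^2*(b.eval x)*(N.eval x)*(d.eval x) + (a.eval x)^3*(N.eval x)*(e.eval x)
      - (M.eval x)*(b.eval x)^2*(c.eval x)^2 + 2*(M.eval x)*(b.eval x)^2*(N.eval x)*(d.eval x)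
      + (M.eval x)*(a.eval x)*(b.eval x)*(c.eval x)*(d.eval x)
      - 3*(M.eval x)*(a.eval x)*(b.eval x)*(N.eval x)*(e.eval x)
      - (M.eval x)*(a.eval x)^2*(c.eval x)*(e.eval x)
      - (M.eval x)^2*(b.eval x)*(d.eval x)^2 + 2*(M.eval x)^2*(b.eval x)*(c.eval x)*(e.eval x)
      + (M.eval x)^2*(a.eval x)*(d.eval x)*(e.eval x) - (M.eval x)^3*(e.eval x)^2 := by
    intro x
    rw [hpoly]
    simp only [eval_add, eval_sub, eval_mul, eval_pow, eval_neg, eval_ofNat]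
  have key : ∀ x : ℝ, 4*(M.eval x)^3 * R₀.eval x =
      ((a.eval x)^2 - 4*(M.eval x)*(b.eval x)) *
        ((M.eval x)^2*(d.eval x) - (a.eval x)*(M.eval x)*(c.eval x)
          + (a.eval x)^2*(N.eval x) - (b.eval x)*(M.eval x)*(N.eval x))^2
      - (2*(M.eval x)*((M.eval x)^2*(e.eval x) - (b.eval x)*(M.eval x)*(c.eval x)
          + (a.eval x)*(b.eval x)*(N.eval x))
        - (a.eval x)*((M.eval x)^2*(d.eval x) - (a.eval x)*(M.eval x)*(c.eval x)
          + (a.eval x)^2*(N.eval x) - (b.eval x)*(M.eval x)*(N.eval x)))^2 := by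
    intro x
    rw [hEV x]
    ring
  have Hloc : ∀ α : ℝ, R₀.eval α = 0 →
      ∃ δ > 0, ((∀ x, |x - α| < δ → 0 ≤ R₀.eval x) ∨ (∀ x, |x - α| < δ → R₀.eval x ≤ 0)) ∧
        (∀ x, x ≠ α → |x - α| < δ → R₀.eval x ≠ 0) := by
    intro α hfα
    have hN : N.eval α ≠ 0 := fun h => hcommon α ⟨hfα, h⟩
    -- isolation of the root α
    obtain ⟨δ₁, hδ₁, hiso⟩ : ∃ δ > 0, ∀ x, x ≠ α → |x - α| < δ → R₀.eval x ≠ 0 := by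
      have hZ : Set.Finite ({x : ℝ | R₀.IsRoot x} \ {α}) :=
        (R₀.finite_setOf_isRoot hR0ne).diff
      have hαnot : α ∉ ({x : ℝ | R₀.IsRoot x} \ {α}) := fun h => h.2 rfl
      have hmem : ({x : ℝ | R₀.IsRoot x} \ {α})ᶜ ∈ nhds α :=
        hZ.isClosed.isOpen_compl.mem_nhds hαnot
      obtain ⟨δ, hδ, hball⟩ := Metric.mem_nhds_iff.mp hmem
      refine ⟨δ, hδ, fun x hx hxd hroot => ?_⟩
      have : x ∈ Metric.ball α δ := by
        rw [Metric.mem_ball, Real.dist_eq]; exact hxd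
      exact (hball this) ⟨hroot, hx⟩
    by_cases hm : M.eval α = 0
    · by_cases ha : a.eval α = 0
      · -- p(α,·) ≡ 0 : common zero directly
        have hb3 : (b.eval α)^3 * (N.eval α)^2 = 0 := by
          have h := hEV α
          rw [hfα, hm, ha] at h
          linear_combination h
        have hb : b.eval α = 0 := by
          have h1 : (b.eval α)^3 = 0 :=
            (mul_eq_zero.mp hb3).resolve_right (pow_ne_zero 2 hN)
          exact pow_eq_zero_iff (three_ne_zero) |>.mp h1
        obtain ⟨β, hβ⟩ := cubic_real_root (N.eval α) (c.eval α) (d.eval α) (e.eval α) hN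
        exact absurd hβ (hnc α β (by rw [hm, ha, hb]; ring))
      · -- p(α,·) linear with root β = -b/a
        set β := -(b.eval α) / (a.eval α) with hβdef
        have hβ : a.eval α * β = -(b.eval α) := by
          rw [hβdef]; field_simp [ha]
        have hp : M.eval α * β ^ 2 + a.eval α * β + b.eval α = 0 := by
          rw [hm]; linear_combination hβ
        have hbr : N.eval α * (-(N.eval α)*(b.eval α)^3 + (c.eval α)*(b.eval α)^2*(a.eval α)
            - (d.eval α)*(b.eval α)*(a.eval α)^2 + (e.eval α)*(a.eval α)^3) = 0 := by
          have h := hEV α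
          rw [hfα, hm] at h
          linear_combination -h
        have hbr0 : -(N.eval α)*(b.eval α)^3 + (c.eval α)*(b.eval α)^2*(a.eval α)
            - (d.eval α)*(b.eval α)*(a.eval α)^2 + (e.eval α)*(a.eval α)^3 = 0 :=
          (mul_eq_zero.mp hbr).resolve_left hN
        have hq3 : (a.eval α)^3 * (N.eval α * β ^ 3 + c.eval α * β ^ 2
            + d.eval α * β + e.eval α) = 0 := by
          linear_combination (N.eval α*((a.eval α)^2*β^2 - a.eval α*(b.eval α)*β
            + (b.eval α)^2) + c.eval α*(a.eval α)*(a.eval α*β - b.eval α)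
            + d.eval α*(a.eval α)^2) * hβ + hbr0
        have hq : N.eval α * β ^ 3 + c.eval α * β ^ 2 + d.eval α * β + e.eval α = 0 :=
          (mul_eq_zero.mp hq3).resolve_left (pow_ne_zero 3 ha)
        exact absurd hq (hnc α β hp)
    · -- M(α) ≠ 0
      set m0 := M.eval α with hm0
      set a0 := a.eval α with ha0
      set b0 := b.eval α with hb0
      set n0 := N.eval α with hn0
      set c0 := c.eval α with hc0
      set d0 := d.eval α with hd0
      set e0 := e.eval α with he0
      set u0 := m0^2*d0 - a0*m0*c0 + a0^2*n0 - b0*m0*n0 with hu0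
      set v0 := m0^2*e0 - b0*m0*c0 + a0*b0*n0 with hv0
      by_cases hdisc : 0 ≤ a0^2 - 4*m0*b0
      · -- real roots of p(α,·); extract a common real zero
        set s := Real.sqrt (a0^2 - 4*m0*b0) with hsdef
        have hs2 : s^2 = a0^2 - 4*m0*b0 := Real.sq_sqrt hdisc
        have hkα := key α
        rw [hfα] at hkα
        have hsq : (2*m0*v0 - a0*u0) * (2*m0*v0 - a0*u0) = (s*u0) * (s*u0) := by
          linear_combination hkα - u0^2 * hs2
        rcases mul_self_eq_mul_self_iff.mp hsq with hcase | hcase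
        · set β := -(a0 + s) / (2*m0) with hβdef
          have hβ : 2*m0*β = -a0 - s := by
            rw [hβdef]; field_simp; ring
          have hp4 : 4*m0*(m0 * β ^ 2 + a0 * β + b0) = 0 := by
            linear_combination (2*m0*β + a0 - s) * hβ + hs2
          have hp : m0 * β ^ 2 + a0 * β + b0 = 0 :=
            (mul_eq_zero.mp hp4).resolve_left (mul_ne_zero four_ne_zero hm)
          have huv : u0*β + v0 = 0 := by
            have h2 : 2*m0*(u0*β + v0) = 0 := by
              linear_combination u0 * hβ + hcase
            exact (mul_eq_zero.mp h2).resolve_left (mul_ne_zero two_ne_zero hm)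
          have hq : n0 * β ^ 3 + c0 * β ^ 2 + d0 * β + e0 = 0 := by
            have hdiv : m0^2 * (n0 * β ^ 3 + c0 * β ^ 2 + d0 * β + e0) =
                (m0 * β ^ 2 + a0 * β + b0) * (m0*n0*β + m0*c0 - a0*n0) + (u0*β + v0) := by
              rw [hu0, hv0]; ring
            rw [hp, huv] at hdiv
            have : m0^2 * (n0 * β ^ 3 + c0 * β ^ 2 + d0 * β + e0) = 0 := by
              rw [hdiv]; ring
            exact (mul_eq_zero.mp this).resolve_left (pow_ne_zero 2 hm)
          exact absurd hq (hnc α β hp)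
        · set β := (-a0 + s) / (2*m0) with hβdef
          have hβ : 2*m0*β = -a0 + s := by
            rw [hβdef]; field_simp
          have hp4 : 4*m0*(m0 * β ^ 2 + a0 * β + b0) = 0 := by
            linear_combination (2*m0*β + a0 + s) * hβ + hs2
          have hp : m0 * β ^ 2 + a0 * β + b0 = 0 :=
            (mul_eq_zero.mp hp4).resolve_left (mul_ne_zero four_ne_zero hm)
          have huv : u0*β + v0 = 0 := by
            have h2 : 2*m0*(u0*β + v0) = 0 := by
              linear_combination u0 * hβ + hcase
            exact (mul_eq_zero.mp h2).resolve_left (mul_ne_zero two_ne_zero hm)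
          have hq : n0 * β ^ 3 + c0 * β ^ 2 + d0 * β + e0 = 0 := by
            have hdiv : m0^2 * (n0 * β ^ 3 + c0 * β ^ 2 + d0 * β + e0) =
                (m0 * β ^ 2 + a0 * β + b0) * (m0*n0*β + m0*c0 - a0*n0) + (u0*β + v0) := by
              rw [hu0, hv0]; ring
            rw [hp, huv] at hdiv
            have : m0^2 * (n0 * β ^ 3 + c0 * β ^ 2 + d0 * β + e0) = 0 := by
              rw [hdiv]; ring
            exact (mul_eq_zero.mp this).resolve_left (pow_ne_zero 2 hm)
          exact absurd hq (hnc α β hp)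
      · -- negative discriminant: R₀ has locally constant (weak) sign
        push_neg at hdisc
        have hcont : Continuous fun x : ℝ =>
            (a.eval x)^2 - 4*(M.eval x)*(b.eval x) :=
          ((a.continuous).pow 2).sub ((continuous_const.mul M.continuous).mul b.continuous)
        rcases lt_or_gt_of_ne hm with hmneg | hmpos
        · -- M(α) < 0 : R₀ ≥ 0 near α
          have hGopen : IsOpen {x : ℝ | (a.eval x)^2 - 4*(M.eval x)*(b.eval x) < 0
              ∧ M.eval x < 0} :=
            (isOpen_lt hcont continuous_const).inter (isOpen_lt M.continuous continuous_const)
          have hGα : α ∈ {x : ℝ | (a.eval x)^2 - 4*(M.eval x)*(b.eval x) < 0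
              ∧ M.eval x < 0} := ⟨hdisc, hmneg⟩
          obtain ⟨δ₂, hδ₂, hball⟩ := Metric.isOpen_iff.mp hGopen α hGα
          refine ⟨min δ₁ δ₂, lt_min hδ₁ hδ₂, Or.inl fun x hx => ?_,
            fun x hx hxd => hiso x hx (lt_of_lt_of_le hxd (min_le_left _ _))⟩
          have hxball : x ∈ Metric.ball α δ₂ := by
            rw [Metric.mem_ball, Real.dist_eq]
            exact lt_of_lt_of_le hx (min_le_right _ _)
          obtain ⟨hx1, hx2⟩ := hball hxball
          have h6 : ((a.eval x)^2 - 4*(M.eval x)*(b.eval x)) *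
              ((M.eval x)^2*(d.eval x) - (a.eval x)*(M.eval x)*(c.eval x)
                + (a.eval x)^2*(N.eval x) - (b.eval x)*(M.eval x)*(N.eval x))^2 ≤ 0 := by
            exact mul_nonpos_of_nonpos_of_nonneg hx1.le (sq_nonneg _)
          have h5 : 4*(M.eval x)^3 * R₀.eval x ≤ 0 := by
            rw [key x]
            linarith [h6, sq_nonneg (2*(M.eval x)*((M.eval x)^2*(e.eval x)
                - (b.eval x)*(M.eval x)*(c.eval x) + (a.eval x)*(b.eval x)*(N.eval x))
              - (a.eval x)*((M.eval x)^2*(d.eval x) - (a.eval x)*(M.eval x)*(c.eval x)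
                + (a.eval x)^2*(N.eval x) - (b.eval x)*(M.eval x)*(N.eval x)))]
          by_contra hcon
          push_neg at hcon
          have h8 : 4*(M.eval x)^3 < 0 := by
            have := Odd.pow_neg (⟨1, by norm_num⟩ : Odd 3) hx2
            linarith
          have h9 : 0 < 4*(M.eval x)^3 * R₀.eval x :=
            mul_pos_of_neg_of_neg h8 hcon
          linarith
        · -- M(α) > 0 : R₀ ≤ 0 near α
          have hGopen : IsOpen {x : ℝ | (a.eval x)^2 - 4*(M.eval x)*(b.eval x) < 0
              ∧ 0 < M.eval x} :=
            (isOpen_lt hcont continuous_const).inter (isOpen_lt continuous_const M.continuous)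
          have hGα : α ∈ {x : ℝ | (a.eval x)^2 - 4*(M.eval x)*(b.eval x) < 0
              ∧ 0 < M.eval x} := ⟨hdisc, hmpos⟩
          obtain ⟨δ₂, hδ₂, hball⟩ := Metric.isOpen_iff.mp hGopen α hGα
          refine ⟨min δ₁ δ₂, lt_min hδ₁ hδ₂, Or.inr fun x hx => ?_,
            fun x hx hxd => hiso x hx (lt_of_lt_of_le hxd (min_le_left _ _))⟩
          have hxball : x ∈ Metric.ball α δ₂ := by
            rw [Metric.mem_ball, Real.dist_eq]
            exact lt_of_lt_of_le hx (min_le_right _ _)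
          obtain ⟨hx1, hx2⟩ := hball hxball
          have h6 : ((a.eval x)^2 - 4*(M.eval x)*(b.eval x)) *
              ((M.eval x)^2*(d.eval x) - (a.eval x)*(M.eval x)*(c.eval x)
                + (a.eval x)^2*(N.eval x) - (b.eval x)*(M.eval x)*(N.eval x))^2 ≤ 0 := by
            exact mul_nonpos_of_nonpos_of_nonneg hx1.le (sq_nonneg _)
          have h5 : 4*(M.eval x)^3 * R₀.eval x ≤ 0 := by
            rw [key x]
            linarith [h6, sq_nonneg (2*(M.eval x)*((M.eval x)^2*(e.eval x)
                - (b.eval x)*(M.eval x)*(c.eval x) + (a.eval x)*(b.eval x)*(N.eval x))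
              - (a.eval x)*((M.eval x)^2*(d.eval x) - (a.eval x)*(M.eval x)*(c.eval x)
                + (a.eval x)^2*(N.eval x) - (b.eval x)*(M.eval x)*(N.eval x)))]
          by_contra hcon
          push_neg at hcon
          have h8 : (0:ℝ) < 4*(M.eval x)^3 := by positivity
          have h9 : 0 < 4*(M.eval x)^3 * R₀.eval x := mul_pos h8 hcon
          linarith
    -- global argument: no sign change of R₀
  have hfc : Continuous fun x : ℝ => R₀.eval x := R₀.continuous
  have main1 : ∀ u v : ℝ, u < v → 0 < R₀.eval u → R₀.eval v < 0 → False :=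
    no_sign_change _ hfc Hloc
  have main2 : ∀ u v : ℝ, u < v → R₀.eval u < 0 → 0 < R₀.eval v → False := by
    intro u v huv hu hv
    refine no_sign_change (fun x => -R₀.eval x) hfc.neg ?_ u v huv
      (neg_pos.mpr hu) (neg_lt_zero.mpr hv)
    intro α hα
    obtain ⟨δ, hδ, hsign, hiso⟩ := Hloc α (neg_eq_zero.mp hα)
    refine ⟨δ, hδ, ?_, fun x hx h2 hfx => hiso x hx h2 (neg_eq_zero.mp hfx)⟩
    rcases hsign with h | h
    · exact Or.inr fun x hx => neg_nonpos.mpr (h x hx)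
    · exact Or.inl fun x hx => neg_nonneg.mpr (h x hx)
  have hbl : R₀.leadingCoeff ≠ 0 := leadingCoeff_ne_zero.mpr hR0ne
  have hdegpos : 0 < R₀.degree := by
    by_contra hdeg
    push_neg at hdeg
    obtain ⟨r, hr⟩ : ∃ r : ℝ, R₀ = C r := ⟨R₀.coeff 0, eq_C_of_degree_le_zero hdeg⟩
    rw [hr] at hz
    simp only [leadingCoeff_C, eval_C] at hz
    linarith [mul_self_nonneg r]
  set P2 : Polynomial ℝ := C R₀.leadingCoeff * R₀ with hP2
  have hdeg2 : 0 < P2.degree := by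
    rw [hP2, degree_C_mul hbl]; exact hdegpos
  have hlc2 : 0 ≤ P2.leadingCoeff := by
    rw [hP2, leadingCoeff_mul, leadingCoeff_C]
    exact mul_self_nonneg _
  have htend := P2.tendsto_atTop_of_leadingCoeff_nonneg hdeg2 hlc2
  obtain ⟨w, hw2, hw1⟩ := ((htend.eventually_gt_atTop 0).and
    (Filter.eventually_gt_atTop z)).exists
  have hw2' : 0 < R₀.leadingCoeff * R₀.eval w := by
    have : P2.eval w = R₀.leadingCoeff * R₀.eval w := by
      rw [hP2, eval_mul, eval_C]
    linarith [this ▸ hw2]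
  rcases mul_neg_iff.mp hz with ⟨hb1, hz2⟩ | ⟨hb1, hz2⟩
  · -- leadingCoeff > 0, R₀ z < 0, R₀ w > 0 (w > z)
    rcases mul_pos_iff.mp hw2' with ⟨_, hw3⟩ | ⟨hb2, _⟩
    · exact main2 z w hw1 hz2 hw3
    · linarith
  · -- leadingCoeff < 0, R₀ z > 0, R₀ w < 0
    rcases mul_pos_iff.mp hw2' with ⟨hb2, _⟩ | ⟨_, hw3⟩
    · linarith
    · exact main1 z w hw1 hz2 hw3
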